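/- Let p be an odd prime and L/k a Galois extension of number fields with Galois group the dihedral group D of order 2p; let F be the fixed field of the rotation subgroup ⟨τ⟩ and K the fixed field of ⟨σ⟩. Then for every m ≥ 2: w_{L,m} = w_{F,m} and w_{K,m} = w_{k,m}, where w_{E,m} denotes the order of the torsion subgroup of H^1(O_E, ℤ(m)). -/

import Mathlib

/-- `wm E m` is the order of the torsion subgroup of `H^1(O_E, ℤ(m))`, via its classical
characterisation `w_{E,m} = |H^0(E, ℚ/ℤ(m))|`: the largest `n` such that
`Gal(E(μ_n)/E)` has exponent dividing `m`, i.e. such that `g^m` fixes every `n`-th root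
of unity in `E(μ_n)` for every `g ∈ Gal(E(μ_n)/E)`. -/
noncomputable def wm (E : Type*) [Field E] [CharZero E] (m : ℕ) : ℕ :=
  sSup {k : ℕ | ∃ n : ℕ+, k = (n : ℕ) ∧
    ∀ (g : CyclotomicField n E ≃ₐ[E] CyclotomicField n E) (ζ : CyclotomicField n E),
      ζ ^ (n : ℕ) = 1 → (g ^ m) ζ = ζ}

open Polynomial
open Polynomial


lemma pow_comm_aux {E E' B A : Type*} [Field E] [Field E'] [Field B] [Field A]
    [Algebra E A] [Algebra E' B] (ι : B → A) (g : A ≃ₐ[E] A) (h : B ≃ₐ[E'] B)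
    (hc : ∀ x, g (ι x) = ι (h x)) : ∀ (M : ℕ) (x : B), (g ^ M) (ι x) = ι ((h ^ M) x) := by
  intro M
  induction M with
  | zero => intro x; simp
  | succ M ih =>
      intro x
      rw [pow_succ, pow_succ, AlgEquiv.mul_apply, AlgEquiv.mul_apply, hc, ih]

lemma zmod_units_comm_aux {n : ℕ} (a b : (ZMod n)ˣ) : a * b * a⁻¹ * b⁻¹ = 1 := by
  rw [← commutatorElement_def]
  exact commutatorElement_eq_one_iff_commute.mpr (mul_comm a b)

lemma r_one_zpow {p : ℕ} (z : ℤ) :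
    (DihedralGroup.r 1 : DihedralGroup p) ^ z = DihedralGroup.r (z : ZMod p) := by
  induction z using Int.induction_on with
  | zero => simp
  | succ n ih =>
      rw [zpow_add, ih, zpow_one]; push_cast
      rw [DihedralGroup.r_mul_r]
  | pred n ih =>
      rw [zpow_sub, ih, zpow_one]; push_cast
      rw [show ((DihedralGroup.r 1 : DihedralGroup p))⁻¹ = DihedralGroup.r (-1) from rfl,
        DihedralGroup.r_mul_r]
      congr 1
      ring

lemma P_iff_chi {k A : Type*} [Field k] [Field A] [Algebra k A] {n : ℕ+} {ζ₀ : A}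
    (hζ₀ : IsPrimitiveRoot ζ₀ (n : ℕ)) (m : ℕ) (g : A ≃ₐ[k] A) :
    (∀ ζ : A, ζ ^ (n : ℕ) = 1 → (g ^ m) ζ = ζ) ↔ (hζ₀.autToPow k g) ^ m = 1 := by
  haveI : NeZero (n : ℕ) := ⟨n.pos.ne'⟩
  have hspec := IsPrimitiveRoot.autToPow_spec k hζ₀ (g ^ m)
  have hone : ζ₀ ^ (1 % (n : ℕ)) = ζ₀ := by
    rcases Nat.lt_or_ge 1 (n : ℕ) with hn | hn
    · rw [Nat.mod_eq_of_lt hn, pow_one]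
    · have hn1 : (n : ℕ) = 1 := le_antisymm hn n.one_le
      have h2 := hζ₀.pow_eq_one
      rw [hn1, pow_one] at h2
      rw [hn1, Nat.mod_self, pow_zero, h2]
  constructor
  · intro h
    have h0 := h ζ₀ hζ₀.pow_eq_one
    rw [← map_pow]
    rw [h0] at hspec
    apply Units.ext
    have hval : (↑(hζ₀.autToPow k (g ^ m)) : ZMod (n : ℕ)).val = 1 % (n : ℕ) :=
      hζ₀.pow_inj (ZMod.val_lt _) (Nat.mod_lt _ n.pos) (by rw [hspec, hone])
    calc (↑(hζ₀.autToPow k (g ^ m)) : ZMod (n : ℕ))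
        = ((↑(hζ₀.autToPow k (g ^ m)) : ZMod (n : ℕ)).val : ZMod (n : ℕ)) := by
          rw [ZMod.natCast_val, ZMod.cast_id]
      _ = ((1 % (n : ℕ) : ℕ) : ZMod (n : ℕ)) := by rw [hval]
      _ = 1 := by rw [ZMod.natCast_mod, Nat.cast_one]
  · intro h ζ hζn
    obtain ⟨j, -, rfl⟩ := hζ₀.eq_pow_of_pow_eq_one hζn
    suffices hgm : (g ^ m) ζ₀ = ζ₀ by rw [map_pow, hgm]
    have h1 : hζ₀.autToPow k (g ^ m) = 1 := by rw [map_pow, h]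
    rw [h1] at hspec
    rw [← hspec, Units.val_one, ZMod.val_one_eq_one_mod, hone]

theorem cond_iff_ambient (E : Type*) [Field E] [CharZero E] (A : Type*) [Field A]
    [Algebra E A] [Normal E A] (n : ℕ+) (m : ℕ) {ζ₀ : A}
    (hζ₀ : IsPrimitiveRoot ζ₀ (n : ℕ)) :
    (∀ (g : CyclotomicField n E ≃ₐ[E] CyclotomicField n E) (ζ : CyclotomicField n E),
        ζ ^ (n : ℕ) = 1 → (g ^ m) ζ = ζ) ↔
      (∀ (g : A ≃ₐ[E] A) (ζ : A), ζ ^ (n : ℕ) = 1 → (g ^ m) ζ = ζ) := by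
  haveI : NeZero ((n : ℕ) : E) := ⟨Nat.cast_ne_zero.mpr n.pos.ne'⟩
  set B := CyclotomicField n E with hB
  haveI hsf : IsSplittingField E B (cyclotomic n E) :=
    IsCyclotomicExtension.splitting_field_cyclotomic n E B
  have hXsplits : Splits ((X ^ (n : ℕ) - 1 : E[X]).map (algebraMap E A)) := by
    have hmap : ((X : E[X]) ^ (n : ℕ) - 1).map (algebraMap E A) = (X ^ (n : ℕ) - C 1 : A[X]) := by
      simp [Polynomial.map_sub, Polynomial.map_pow, Polynomial.map_one]
    rw [hmap]
    exact X_pow_sub_one_splits hζ₀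
  have hXne : (X ^ (n : ℕ) - 1 : E[X]) ≠ 0 := by
    simpa using X_pow_sub_C_ne_zero n.pos (1 : E)
  have hsp : Splits ((cyclotomic n E).map (algebraMap E A)) :=
    hXsplits.of_dvd (Polynomial.map_ne_zero hXne) (Polynomial.map_dvd _ (cyclotomic.dvd_X_pow_sub_one n E))
  letI : Algebra B A := (IsSplittingField.lift B (cyclotomic n E) hsp).toRingHom.toAlgebra
  haveI : IsScalarTower E B A := IsScalarTower.of_algebraMap_eq
    (fun x => ((IsSplittingField.lift B (cyclotomic n E) hsp).commutes x).symm)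
  haveI : Normal E B := Normal.of_isSplittingField (cyclotomic n E)
  set ζB := IsCyclotomicExtension.zeta n E B with hζBdef
  have hζB : IsPrimitiveRoot ζB (n : ℕ) := IsCyclotomicExtension.zeta_spec n E B
  have hζB' : IsPrimitiveRoot (algebraMap B A ζB) (n : ℕ) :=
    hζB.map_of_injective (algebraMap B A).injective
  haveI : NeZero (n : ℕ) := ⟨n.pos.ne'⟩
  constructor
  · intro hBcond g ζ hζn
    set h : B ≃ₐ[E] B := g.restrictNormal B with hdef
    have hc : ∀ x, g (algebraMap B A x) = algebraMap B A (h x) := fun x =>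
      (AlgEquiv.restrictNormal_commutes g B x).symm
    obtain ⟨j, -, hj⟩ := hζB'.eq_pow_of_pow_eq_one hζn
    rw [← hj, ← map_pow]
    rw [pow_comm_aux (algebraMap B A) g h hc m (ζB ^ j)]
    rw [hBcond h (ζB ^ j) (by rw [← pow_mul, mul_comm, pow_mul, hζB.pow_eq_one, one_pow])]
  · intro hA g ζ hζn
    set glift := g.liftNormal A with hgdef
    have hc : ∀ x, glift (algebraMap B A x) = algebraMap B A (g x) := fun x =>
      AlgEquiv.liftNormal_commutes g A x
    have h2 := hA glift (algebraMap B A ζ) (by rw [← map_pow, hζn, map_one])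
    rw [pow_comm_aux (algebraMap B A) glift g hc m ζ] at h2
    exact (algebraMap B A).injective h2

noncomputable def Cond (E : Type*) [Field E] [CharZero E] (n : ℕ+) (m : ℕ) : Prop :=
  ∀ (g : CyclotomicField n E ≃ₐ[E] CyclotomicField n E) (ζ : CyclotomicField n E),
      ζ ^ (n : ℕ) = 1 → (g ^ m) ζ = ζ

theorem main_iff (p : ℕ) [Fact p.Prime] (hp : Odd p)
    (k L : Type*) [Field k] [Field L] [CharZero k] [CharZero L]
    [Algebra k L] [IsGalois k L] [FiniteDimensional k L]
    (e : (L ≃ₐ[k] L) ≃* DihedralGroup p) (n : ℕ+) (m : ℕ) :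
    (Cond L n m ↔ Cond (IntermediateField.fixedField
        (Subgroup.zpowers (e.symm (DihedralGroup.r (1 : ZMod p))))) n m) ∧
    (Cond (IntermediateField.fixedField
        (Subgroup.zpowers (e.symm (DihedralGroup.sr (0 : ZMod p))))) n m ↔ Cond k n m) := by
  classical
  set τ' := e.symm (DihedralGroup.r (1 : ZMod p)) with hτ
  set σ' := e.symm (DihedralGroup.sr (0 : ZMod p)) with hσ
  set A := CyclotomicField n L with hA
  haveI : NeZero ((n : ℕ) : L) := ⟨Nat.cast_ne_zero.mpr n.pos.ne'⟩
  haveI : NeZero (n : ℕ) := ⟨n.pos.ne'⟩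
  have hζ₀ : IsPrimitiveRoot (IsCyclotomicExtension.zeta n L A) (n : ℕ) :=
    IsCyclotomicExtension.zeta_spec n L A
  haveI hsfL : IsSplittingField L A (cyclotomic n L) :=
    IsCyclotomicExtension.splitting_field_cyclotomic n L A
  haveI : Normal L A := Normal.of_isSplittingField (cyclotomic n L)
  -- Normal k A
  obtain ⟨f₀, hf₀⟩ := Normal.exists_isSplittingField k L
  have hsplitL : ∃ f : k[X], f ≠ 0 ∧ IsSplittingField k L f := by
    by_cases h0 : f₀ = 0
    · refine ⟨1, one_ne_zero, ⟨by rw [Polynomial.map_one]; exact Splits.one, ?_⟩⟩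
      have h1 := hf₀.adjoin_rootSet'
      rw [h0, rootSet_zero] at h1
      rwa [rootSet_one]
    · exact ⟨f₀, h0, hf₀⟩
  obtain ⟨f, hfne, hfsf⟩ := hsplitL
  haveI := hfsf
  haveI : IsSplittingField L A ((cyclotomic n k).map (algebraMap k L)) := by
    rw [map_cyclotomic]
    exact hsfL
  haveI : IsSplittingField k A (f * cyclotomic n k) :=
    IsSplittingField.mul (F := k) (K := L) A f (cyclotomic ↑n k) hfne (cyclotomic_ne_zero n k)
  haveI hNkA : Normal k A := Normal.of_isSplittingField (f * cyclotomic n k)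
  set χ : (A ≃ₐ[k] A) →* (ZMod (n : ℕ))ˣ := hζ₀.autToPow k with hχ
  set res : (A ≃ₐ[k] A) →* (L ≃ₐ[k] L) := AlgEquiv.restrictNormalHom L with hres
  have hsurj : Function.Surjective res := AlgEquiv.restrictNormalHom_surjective (K₁ := L) A
  have h2ne : (2 : ZMod p) ≠ 0 := by
    have hp2 : p ≠ 2 := by rintro rfl; exact (by norm_num : ¬ Odd 2) hp
    intro h
    rw [show (2 : ZMod p) = ((2 : ℕ) : ZMod p) by push_cast; ring] at h
    rw [ZMod.natCast_eq_zero_iff] at h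
    exact hp2 ((Nat.prime_dvd_prime_iff_eq Fact.out Nat.prime_two).mp h)
  have hτpow : ∀ z : ℤ, τ' ^ z = e.symm (DihedralGroup.r (z : ZMod p)) := fun z => by
    rw [hτ, ← map_zpow, r_one_zpow]
  have hB1 : ∀ i : ZMod p, ∃ c : A ≃ₐ[k] A, χ c = 1 ∧ res c = e.symm (DihedralGroup.r i) := by
    intro i
    obtain ⟨s, hs⟩ := hsurj (e.symm (DihedralGroup.sr 0))
    obtain ⟨t, ht⟩ := hsurj (e.symm (DihedralGroup.r (-(i * 2⁻¹))))
    refine ⟨s * t * s⁻¹ * t⁻¹, ?_, ?_⟩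
    · rw [map_mul, map_mul, map_mul, map_inv, map_inv]
      exact zmod_units_comm_aux _ _
    · have hd : DihedralGroup.sr 0 * DihedralGroup.r (-(i * 2⁻¹)) *
          (DihedralGroup.sr (0 : ZMod p))⁻¹ * (DihedralGroup.r (-(i * 2⁻¹)) : DihedralGroup p)⁻¹
          = DihedralGroup.r i := by
        rw [show ((DihedralGroup.sr (0 : ZMod p))⁻¹ : DihedralGroup p) = DihedralGroup.sr 0 from
            rfl,
          show ((DihedralGroup.r (-(i * 2⁻¹)))⁻¹ : DihedralGroup p)
            = DihedralGroup.r (-(-(i * 2⁻¹))) from rfl,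
          DihedralGroup.sr_mul_r, DihedralGroup.sr_mul_sr, DihedralGroup.r_mul_r]
        congr 1
        have h2 : (2⁻¹ : ZMod p) * 2 = 1 := inv_mul_cancel₀ h2ne
        linear_combination i * h2
      rw [map_mul, map_mul, map_mul, map_inv, map_inv, hs, ht, ← map_inv e.symm,
        ← map_inv e.symm, ← map_mul, ← map_mul, ← map_mul, hd]
  have hPchi : ∀ g : A ≃ₐ[k] A,
      (∀ ζ : A, ζ ^ (n : ℕ) = 1 → (g ^ m) ζ = ζ) ↔ (χ g) ^ m = 1 :=
    fun g => P_iff_chi hζ₀ m g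
  have hCondL : Cond L n m ↔ (∀ g : A ≃ₐ[k] A, res g = 1 → (χ g) ^ m = 1) := by
    refine Iff.trans (cond_iff_ambient L A n m hζ₀) ?_
    constructor
    · intro h g hg1
      rw [← hPchi g]
      intro ζ hζn
      have hfix : ∀ x : L, g.toRingEquiv (algebraMap L A x) = algebraMap L A x := by
        intro x
        have hcomm := AlgEquiv.restrictNormal_commutes g L x
        have h1 : g.restrictNormal L = 1 := hg1
        rw [h1] at hcomm
        rw [show g.toRingEquiv (algebraMap L A x) = g (algebraMap L A x) from rfl, ← hcomm]
        rfl
      let g' : A ≃ₐ[L] A := AlgEquiv.ofRingEquiv hfix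
      have hthis := h g' ζ hζn
      have hpow : (g' ^ m) ζ = (g ^ m) ζ := pow_comm_aux id g' g (fun _ => rfl) m ζ
      rw [hpow] at hthis
      exact hthis
    · intro h g ζ hζn
      have hfixk : ∀ x : k, g.toRingEquiv (algebraMap k A x) = algebraMap k A x := by
        intro x
        rw [IsScalarTower.algebraMap_apply k L A]
        exact g.commutes _
      let gk : A ≃ₐ[k] A := AlgEquiv.ofRingEquiv hfixk
      have hres1 : res gk = 1 := by
        apply AlgEquiv.ext; intro y
        apply (algebraMap L A).injective
        calc algebraMap L A (res gk y) = gk (algebraMap L A y) :=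
              AlgEquiv.restrictNormal_commutes gk L y
          _ = g (algebraMap L A y) := rfl
          _ = algebraMap L A y := g.commutes y
          _ = algebraMap L A ((1 : L ≃ₐ[k] L) y) := rfl
      have hthis := (hPchi gk).mpr (h gk hres1) ζ hζn
      have hpow : (gk ^ m) ζ = (g ^ m) ζ := pow_comm_aux id gk g (fun _ => rfl) m ζ
      rw [hpow] at hthis
      exact hthis
  have hCondInter : ∀ H : Subgroup (L ≃ₐ[k] L),
      Cond (IntermediateField.fixedField H) n m ↔
        (∀ g : A ≃ₐ[k] A, res g ∈ H → (χ g) ^ m = 1) := by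
    intro H
    set F := IntermediateField.fixedField H with hF
    haveI : IsScalarTower k F A := IsScalarTower.of_algebraMap_eq (fun x => by
      rw [IsScalarTower.algebraMap_apply k L A, IsScalarTower.algebraMap_apply k F L,
        IsScalarTower.algebraMap_apply F L A])
    haveI : Normal F A := Normal.tower_top_of_normal k F A
    have hfix_iff : ∀ g : A ≃ₐ[k] A,
        (∀ x : F, g (algebraMap F A x) = algebraMap F A x) ↔ res g ∈ H := by
      intro g
      rw [← IntermediateField.fixingSubgroup_fixedField H,
        IntermediateField.mem_fixingSubgroup_iff]
      constructor
      · intro hfix x hx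
        have h1 := hfix ⟨x, hx⟩
        rw [IsScalarTower.algebraMap_apply F L A,
          show (algebraMap F L ⟨x, hx⟩ : L) = x from rfl] at h1
        apply (algebraMap L A).injective
        calc algebraMap L A (res g x) = g (algebraMap L A x) :=
              AlgEquiv.restrictNormal_commutes g L x
          _ = algebraMap L A x := h1
      · intro hmem x
        rw [IsScalarTower.algebraMap_apply F L A]
        have h2 := AlgEquiv.restrictNormal_commutes g L (algebraMap F L x)
        rw [← h2]
        congr 1
        exact hmem (algebraMap F L x) x.2
    refine Iff.trans (cond_iff_ambient F A n m hζ₀) ?_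
    constructor
    · intro h g hmem
      rw [← hPchi g]
      intro ζ hζn
      have hfix := (hfix_iff g).mpr hmem
      let g' : A ≃ₐ[F] A := AlgEquiv.ofRingEquiv (f := g.toRingEquiv) hfix
      have hthis := h g' ζ hζn
      have hpow : (g' ^ m) ζ = (g ^ m) ζ := pow_comm_aux id g' g (fun _ => rfl) m ζ
      rw [hpow] at hthis
      exact hthis
    · intro h g ζ hζn
      have hfixk : ∀ x : k, g.toRingEquiv (algebraMap k A x) = algebraMap k A x := by
        intro x
        rw [IsScalarTower.algebraMap_apply k F A]
        exact g.commutes _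
      let gk : A ≃ₐ[k] A := AlgEquiv.ofRingEquiv hfixk
      have hmem : res gk ∈ H := (hfix_iff gk).mp (fun x => g.commutes x)
      have hthis := (hPchi gk).mpr (h gk hmem) ζ hζn
      have hpow : (gk ^ m) ζ = (g ^ m) ζ := pow_comm_aux id gk g (fun _ => rfl) m ζ
      rw [hpow] at hthis
      exact hthis
  have hCondk : Cond k n m ↔ (∀ g : A ≃ₐ[k] A, (χ g) ^ m = 1) :=
    Iff.trans (cond_iff_ambient k A n m hζ₀) (forall_congr' hPchi)
  constructor
  · rw [hCondL, hCondInter (Subgroup.zpowers τ')]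
    constructor
    · intro h g hg
      obtain ⟨z, hz⟩ := Subgroup.mem_zpowers_iff.mp hg
      obtain ⟨c, hc1, hc2⟩ := hB1 ((z : ℤ) : ZMod p)
      have hres1 : res (c⁻¹ * g) = 1 := by
        rw [map_mul, map_inv, hc2, ← hz, hτpow z]
        simp
      have hq := h (c⁻¹ * g) hres1
      rw [map_mul, map_inv, hc1] at hq
      simpa using hq
    · intro h g hg
      exact h g (by rw [hg]; exact one_mem _)
  · rw [hCondInter (Subgroup.zpowers σ'), hCondk]
    constructor
    · intro h g
      rcases hcase : e (res g) with i | i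
      · obtain ⟨c, hc1, hc2⟩ := hB1 i
        have hrg : res g = e.symm (DihedralGroup.r i) := by
          rw [← hcase, MulEquiv.symm_apply_apply]
        have hres1 : res (c⁻¹ * g) ∈ Subgroup.zpowers σ' := by
          rw [map_mul, map_inv, hc2, hrg, inv_mul_cancel]
          exact one_mem _
        have hq := h (c⁻¹ * g) hres1
        rw [map_mul, map_inv, hc1] at hq
        simpa using hq
      · obtain ⟨c, hc1, hc2⟩ := hB1 (-i)
        have hrg : res g = e.symm (DihedralGroup.sr i) := by
          rw [← hcase, MulEquiv.symm_apply_apply]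
        have hres1 : res (c⁻¹ * g) ∈ Subgroup.zpowers σ' := by
          rw [map_mul, map_inv, hc2, hrg, ← map_inv, ← map_mul]
          rw [show ((DihedralGroup.r (-i))⁻¹ : DihedralGroup p) = DihedralGroup.r (-(-i)) from rfl,
            neg_neg, DihedralGroup.r_mul_sr, sub_self]
          exact Subgroup.mem_zpowers _
        have hq := h (c⁻¹ * g) hres1
        rw [map_mul, map_inv, hc1] at hq
        simpa using hq
    · intro h g _
      exact h g

/-- Let `p` be an odd prime and `L/k` a Galois extension of number fields with Galois
group the dihedral group `D` of order `2p`; let `F` be the fixed field of the rotation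
subgroup `⟨τ⟩` and `K` the fixed field of `⟨σ⟩`.  Then for every `m ≥ 2`:
`w_{L,m} = w_{F,m}` and `w_{K,m} = w_{k,m}`, where `w_{E,m}` is the order of the torsion
subgroup of `H^1(O_E, ℤ(m))`. -/
theorem stmt_17 (p : ℕ) [Fact p.Prime] (hp : Odd p)
    (k L : Type*) [Field k] [Field L] [NumberField k] [NumberField L]
    [Algebra k L] [IsGalois k L]
    (e : (L ≃ₐ[k] L) ≃* DihedralGroup p) :
    ∀ m : ℕ, 2 ≤ m →
      wm L m
          = wm (IntermediateField.fixedField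
              (Subgroup.zpowers (e.symm (DihedralGroup.r (1 : ZMod p))))) m ∧
      wm (IntermediateField.fixedField
              (Subgroup.zpowers (e.symm (DihedralGroup.sr (0 : ZMod p))))) m
          = wm k m := by
  intro m hm
  haveI : IsScalarTower ℚ k L := IsScalarTower.of_algebraMap_eq' (Subsingleton.elim _ _)
  haveI : FiniteDimensional k L := FiniteDimensional.right ℚ k L
  have key := fun n : ℕ+ => main_iff p hp k L e n m
  constructor
  · unfold wm
    congr 1
    ext x
    constructor
    · rintro ⟨n, rfl, h⟩
      exact ⟨n, rfl, ((key n).1).mp h⟩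
    · rintro ⟨n, rfl, h⟩
      exact ⟨n, rfl, ((key n).1).mpr h⟩
  · unfold wm
    congr 1
    ext x
    constructor
    · rintro ⟨n, rfl, h⟩
      exact ⟨n, rfl, ((key n).2).mp h⟩
    · rintro ⟨n, rfl, h⟩
      exact ⟨n, rfl, ((key n).2).mpr h⟩
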